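/- Let M be a real d×d matrix with spectral radius of |M| strictly less than 1, let φ : ℝ → ℝ be componentwise non-expansive, and let v ∈ ℝ^d. Define the Picard iteration x₀ = 0 and x_{t+1} = φ(M x_t + v) (φ applied entrywise). Then the sequence (x_t) converges, and its limit x satisfies x = φ(Mx + v). -/

import Mathlib

open Matrix Filter

/-- The spectral radius of a real square matrix: the supremum of the moduli of its
complex eigenvalues (elements of the spectrum of the matrix viewed over `ℂ`). -/
noncomputable def specRad {ι : Type*} [Fintype ι] [DecidableEq ι]
    (M : Matrix ι ι ℝ) : ENNReal :=
  spectralRadius ℂ (M.map Complex.ofReal)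

section Aux
attribute [local instance] Matrix.linftyOpNormedAddCommGroup Matrix.linftyOpNormedRing
  Matrix.linftyOpNormedAlgebra

local instance completeAux {d : ℕ} : CompleteSpace (Matrix (Fin d) (Fin d) ℂ) :=
  by infer_instance

lemma summable_norm_pow {d : ℕ} (A : Matrix (Fin d) (Fin d) ℝ) (h : specRad A < 1) :
    Summable (fun n => ‖A ^ n‖) := by
  set B : Matrix (Fin d) (Fin d) ℂ := A.map Complex.ofReal with hB
  have hmap : ∀ n : ℕ, B ^ n = (A ^ n).map Complex.ofReal := fun n =>
    (map_pow (Complex.ofRealHom.mapMatrix) A n).symm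
  have hnorm : ∀ X : Matrix (Fin d) (Fin d) ℝ, ‖X.map Complex.ofReal‖ = ‖X‖ := fun X => by
    simp [Matrix.linfty_opNorm_def, Matrix.map_apply]
  obtain ⟨r, hr1, hr2⟩ := ENNReal.lt_iff_exists_nnreal_btwn.mp h
  have hgel := spectrum.pow_nnnorm_pow_one_div_tendsto_nhds_spectralRadius B
  have hev : ∀ᶠ n : ℕ in atTop, (‖B ^ n‖₊ : ENNReal) ^ (1 / (n : ℝ)) < (r : ENNReal) :=
    hgel.eventually_lt_const hr1
  have hr2' : (r : ℝ) < 1 := by exact_mod_cast hr2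
  have hBd : ∀ᶠ n : ℕ in atTop, ‖A ^ n‖ ≤ (r : ℝ) ^ n := by
    filter_upwards [hev, eventually_ge_atTop 1] with n hn hn1
    have hnne : (1 / (n : ℝ)) * n = 1 := by
      field_simp
    have h2 : ((‖B ^ n‖₊ : ENNReal) ^ (1 / (n : ℝ))) ^ (n : ℝ)
        < (r : ENNReal) ^ (n : ℝ) := by
      apply ENNReal.rpow_lt_rpow hn
      positivity
    rw [← ENNReal.rpow_mul, hnne, ENNReal.rpow_one, ENNReal.rpow_natCast] at h2
    have h3 : ‖B ^ n‖₊ ≤ r ^ n := by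
      have := h2.le
      rw [← ENNReal.coe_pow, ENNReal.coe_le_coe] at this
      exact this
    have h4 : ‖A ^ n‖ = ‖B ^ n‖ := by rw [hmap n, hnorm]
    rw [h4]
    exact_mod_cast h3
  have hO : (fun n => ‖A ^ n‖) =O[atTop] (fun n => (r : ℝ) ^ n) := by
    apply Asymptotics.IsBigO.of_bound 1
    filter_upwards [hBd] with n hn
    simpa [abs_of_nonneg (norm_nonneg (A ^ n)), abs_of_nonneg (pow_nonneg r.coe_nonneg n)]
      using hn
  exact summable_of_isBigO_nat (summable_geometric_of_lt_one r.coe_nonneg hr2') hO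

section Main
attribute [local instance] Matrix.linftyOpNormedAddCommGroup Matrix.linftyOpNormedRing

theorem stmt_1 {d : ℕ} (M : Matrix (Fin d) (Fin d) ℝ)
    (hρ : specRad (M.map fun a => |a|) < 1)
    (φ : ℝ → ℝ) (hφ : ∀ a b : ℝ, |φ a - φ b| ≤ |a - b|)
    (v : Fin d → ℝ)
    (x : ℕ → Fin d → ℝ)
    (hx0 : x 0 = 0)
    (hxs : ∀ t, x (t + 1) = fun i => φ ((M.mulVec (x t) + v) i)) :
    ∃ xl : Fin d → ℝ,
      Tendsto x atTop (nhds xl) ∧ xl = fun i => φ ((M.mulVec xl + v) i) := by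
  classical
  set N : Matrix (Fin d) (Fin d) ℝ := M.map fun a => |a| with hN
  set w : Fin d → ℝ := fun j => |x 1 j| with hw
  have key : ∀ n : ℕ, ∀ i, |x (n + 1) i - x n i| ≤ ((N ^ n).mulVec w) i := by
    intro n
    induction n with
    | zero =>
      intro i
      simp [hx0, hw, Matrix.one_mulVec]
    | succ n ih =>
      intro i
      have e1 : x (n + 1 + 1) i = φ ((M.mulVec (x (n + 1)) + v) i) := by rw [hxs (n + 1)]
      have e2 : x (n + 1) i = φ ((M.mulVec (x n) + v) i) := by rw [hxs n]
      have h1 : |x (n + 1 + 1) i - x (n + 1) i|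
          ≤ |(M.mulVec (x (n + 1))) i - (M.mulVec (x n)) i| := by
        rw [e1, e2]
        simpa [add_sub_add_right_eq_sub] using
          hφ ((M.mulVec (x (n + 1)) + v) i) ((M.mulVec (x n) + v) i)
      have h2 : (M.mulVec (x (n + 1))) i - (M.mulVec (x n)) i
          = ∑ j, M i j * (x (n + 1) j - x n j) := by
        simp [Matrix.mulVec, dotProduct, mul_sub, Finset.sum_sub_distrib]
      have h3 : |∑ j, M i j * (x (n + 1) j - x n j)|
          ≤ ∑ j, |M i j| * |x (n + 1) j - x n j| := by
        refine (Finset.abs_sum_le_sum_abs _ _).trans (le_of_eq ?_)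
        simp [abs_mul]
      have h4 : ∑ j, |M i j| * |x (n + 1) j - x n j|
          ≤ ∑ j, |M i j| * ((N ^ n).mulVec w) j :=
        Finset.sum_le_sum fun j _ =>
          mul_le_mul_of_nonneg_left (by simpa [abs_sub_comm] using ih j) (abs_nonneg _)
      have h5 : ∑ j, |M i j| * ((N ^ n).mulVec w) j = ((N ^ (n + 1)).mulVec w) i := by
        rw [pow_succ', ← Matrix.mulVec_mulVec]
        simp [Matrix.mulVec, dotProduct, hN, Matrix.map_apply]
      calc |x (n + 1 + 1) i - x (n + 1) i|
          ≤ |(M.mulVec (x (n + 1))) i - (M.mulVec (x n)) i| := h1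
        _ = |∑ j, M i j * (x (n + 1) j - x n j)| := by rw [h2]
        _ ≤ ∑ j, |M i j| * |x (n + 1) j - x n j| := h3
        _ ≤ ∑ j, |M i j| * ((N ^ n).mulVec w) j := h4
        _ = ((N ^ (n + 1)).mulVec w) i := h5
  have hd : ∀ n : ℕ, dist (x n) (x (n + 1)) ≤ ‖N ^ n‖ * ‖w‖ := by
    intro n
    rw [dist_comm, dist_eq_norm]
    have hc : (0 : ℝ) ≤ ‖N ^ n‖ * ‖w‖ := by positivity
    refine (pi_norm_le_iff_of_nonneg hc).mpr fun i => ?_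
    calc ‖(x (n + 1) - x n) i‖ = |x (n + 1) i - x n i| := by simp [Real.norm_eq_abs]
      _ ≤ ((N ^ n).mulVec w) i := key n i
      _ ≤ |((N ^ n).mulVec w) i| := le_abs_self _
      _ ≤ ‖(N ^ n).mulVec w‖ := by
          simpa [Real.norm_eq_abs] using norm_le_pi_norm ((N ^ n).mulVec w) i
      _ ≤ ‖N ^ n‖ * ‖w‖ := Matrix.linfty_opNorm_mulVec _ _
  have hsum : Summable fun n : ℕ => ‖N ^ n‖ * ‖w‖ :=
    (summable_norm_pow N hρ).mul_right ‖w‖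
  have hcauchy : CauchySeq x := cauchySeq_of_dist_le_of_summable _ hd hsum
  obtain ⟨xl, hxl⟩ := cauchySeq_tendsto_of_complete hcauchy
  have hφc : Continuous φ := by
    have : LipschitzWith 1 φ :=
      LipschitzWith.of_dist_le_mul fun a b => by
        simpa [Real.dist_eq] using hφ a b
    exact this.continuous
  have hFc : Continuous fun y : Fin d → ℝ => (fun i => φ ((M.mulVec y + v) i)) := by
    refine continuous_pi fun i => ?_
    refine hφc.comp ?_
    have : Continuous fun y : Fin d → ℝ => (M.mulVec y) i := by
      simp only [Matrix.mulVec, dotProduct]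
      exact continuous_finset_sum _ fun j _ => continuous_const.mul (continuous_apply j)
    exact this.add continuous_const
  refine ⟨xl, hxl, ?_⟩
  have h1 : Tendsto (fun n => x (n + 1)) atTop (nhds xl) :=
    hxl.comp (tendsto_add_atTop_nat 1)
  have h2 : Tendsto (fun n => (fun i => φ ((M.mulVec (x n) + v) i))) atTop
      (nhds (fun i => φ ((M.mulVec xl + v) i))) := (hFc.tendsto xl).comp hxl
  have h3 : (fun n => x (n + 1)) = fun n => (fun i => φ ((M.mulVec (x n) + v) i)) :=
    funext fun n => hxs n
  rw [h3] at h1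
  exact tendsto_nhds_unique h1 h2

end Main
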